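/- In a one-player sequential game consisting of a root node with edges to leaves labelled by all outcomes of a cycle x₀ ≺ x₁ ≺ ... ≺ x_{k-1} ≺ x₀ in the player's preference relation, the Subgame-Improvement dynamics does not terminate: there is an infinite sequence of strategy profiles s⁰, s¹, s², ... with sᵏ ⇀_{SI} s^{k+1} for all k. -/

import Mathlib

namespace SeqGame

inductive GameTree (N O : Type) : Type where
  | leaf (o : O) : GameTree N O
  | node (i : N) (children : List (GameTree N O)) : GameTree N O

namespace GameTree

variable {N O : Type}

/-- The subtree of `T` at position `p` (a list of child indices), if it exists. -/
def subtree : GameTree N O → List ℕ → Option (GameTree N O)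
  | t, [] => some t
  | leaf _, _ :: _ => none
  | node _ c, k :: p =>
    match getElem? c k with
    | some t => subtree t p
    | none => none

/-- A strategy profile: a choice of a child index at every position. -/
abbrev Profile := List ℕ → ℕ

/-- A profile is legal if it chooses an existing child at every internal node. -/
def Legal (T : GameTree N O) (s : Profile) : Prop :=
  ∀ p i c, T.subtree p = some (node i c) → s p < c.length

/-- The profiles `s` and `s'` differ at the (valid, internal) node `p`. -/
def Differs (T : GameTree N O) (s s' : Profile) (p : List ℕ) : Prop :=
  (∃ i c, T.subtree p = some (node i c)) ∧ s p ≠ s' p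

/-- The outcome reached when playing according to the profile `s`. -/
def outcome : GameTree N O → Profile → Option O
  | leaf o, _ => some o
  | node _ c, s =>
    match h : getElem? c (s []) with
    | some t => outcome t (fun p => s (s [] :: p))
    | none => none
decreasing_by
  have hm : t ∈ c := by
    exact List.mem_of_getElem? h
  have := List.sizeOf_lt_of_mem hm
  simp only [node.sizeOf_spec]
  omega

/-- The profile `s` re-rooted at position `p`. -/
def shift (s : Profile) (p : List ℕ) : Profile := fun q => s (p ++ q)

/-- The owner of the node at position `p`, if it is internal. -/
def ownerAt (T : GameTree N O) (p : List ℕ) : Option N :=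
  match T.subtree p with
  | some (node i _) => some i
  | _ => none

/-- `p` lies along the play induced by `s`. -/
def OnPlay (s : Profile) (p : List ℕ) : Prop :=
  ∀ q k, (q ++ [k]) <+: p → s q = k

/-- Improvement property: every player who changes strictly improves the outcome. -/
def Iprop (T : GameTree N O) (pref : N → O → O → Prop) (s s' : Profile) : Prop :=
  ∀ p i c, T.subtree p = some (node i c) → s p ≠ s' p →
    ∃ x y, T.outcome s = some x ∧ T.outcome s' = some y ∧ pref i x y

/-- Subgame improvement property. -/
def SIprop (T : GameTree N O) (pref : N → O → O → Prop) (s s' : Profile) : Prop :=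
  ∀ p i c, T.subtree p = some (node i c) → s p ≠ s' p →
    ∃ x y, outcome (node i c) (shift s p) = some x ∧
      outcome (node i c) (shift s' p) = some y ∧ pref i x y

/-- Laziness property: all changed nodes lie along the play induced by `s'`. -/
def Lprop (T : GameTree N O) (s s' : Profile) : Prop :=
  ∀ p, Differs T s s' p → OnPlay s' p

/-- One player property: at most one player changes his strategy. -/
def P1prop (T : GameTree N O) (s s' : Profile) : Prop :=
  ∃ i : N, ∀ p, Differs T s s' p → T.ownerAt p = some i

/-- Atomicity property: at most one node changes. -/
def Aprop (T : GameTree N O) (s s' : Profile) : Prop :=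
  ∀ p q, Differs T s s' p → Differs T s s' q → p = q

/-- Names of the update properties. -/
inductive Upd : Type | I | SI | L | P1 | A
deriving DecidableEq

/-- Interpretation of an update property name. -/
def holds (T : GameTree N O) (pref : N → O → O → Prop) : Upd → Profile → Profile → Prop
  | .I => Iprop T pref
  | .SI => SIprop T pref
  | .L => Lprop T
  | .P1 => P1prop T
  | .A => Aprop T

/-- The X-dynamics: an actual update (between legal profiles) satisfying
all properties in `X`. -/
def XDyn (X : Set Upd) (T : GameTree N O) (pref : N → O → O → Prop)
    (s s' : Profile) : Prop :=
  Legal T s ∧ Legal T s' ∧ (∃ p, Differs T s s' p) ∧ ∀ u ∈ X, holds T pref u s s'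

/-- A dynamics terminates iff there is no infinite update sequence. -/
def Terminates (D : Profile → Profile → Prop) : Prop :=
  ¬ ∃ f : ℕ → Profile, ∀ n, D (f n) (f (n + 1))

/-- `s'` is a deviation from `s` by the coalition `I`. -/
def Deviation (T : GameTree N O) (I : Set N) (s s' : Profile) : Prop :=
  Legal T s' ∧ ∀ p i c, T.subtree p = some (node i c) → i ∉ I → s p = s' p

/-- Nash equilibrium. -/
def IsNE (T : GameTree N O) (pref : N → O → O → Prop) (s : Profile) : Prop :=
  ∀ i s', Deviation T {i} s s' →
    ∀ x y, T.outcome s = some x → T.outcome s' = some y → ¬ pref i x y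

/-- Subgame perfect equilibrium: an NE in every subgame. -/
def IsSPE (T : GameTree N O) (pref : N → O → O → Prop) (s : Profile) : Prop :=
  ∀ p t, T.subtree p = some t → IsNE t pref (shift s p)

/-- Strong Nash equilibrium (Aumann). -/
def IsSNE (T : GameTree N O) (pref : N → O → O → Prop) (s : Profile) : Prop :=
  ∀ I : Set N, I.Nonempty → ∀ s', Deviation T I s s' →
    ∃ i ∈ I, ∀ x y, T.outcome s = some x → T.outcome s' = some y → ¬ pref i x y

/-- A relation is acyclic if it has no cycle. -/
def Acyclic (r : O → O → Prop) : Prop := ∀ x, ¬ Relation.TransGen r x x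

/-- Incomparability. -/
def Incomp (r : O → O → Prop) (x y : O) : Prop := ¬ r x y ∧ ¬ r y x

/-- Strict weak order: irreflexive, transitive, with transitive incomparability. -/
def IsSWO (r : O → O → Prop) : Prop :=
  (∀ x, ¬ r x x) ∧ (∀ x y z, r x y → r y z → r x z) ∧
    (∀ x y z, Incomp r x y → Incomp r y z → Incomp r x z)

/-- Strict linear order: irreflexive, transitive and total. -/
def IsSLO (r : O → O → Prop) : Prop :=
  (∀ x, ¬ r x x) ∧ (∀ x y z, r x y → r y z → r x z) ∧
    (∀ x y, x ≠ y → r x y ∨ r y x)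

/-- Absence of the main pattern. -/
def OutOfMainPattern (pref : N → O → O → Prop) : Prop :=
  ∀ (i j : N) (x y z : O),
    ¬ (pref i x y ∧ pref i y z ∧ pref j y z ∧ pref j z x)

/-- Absence of the secondary pattern. -/
def OutOfSecondaryPattern (pref : N → O → O → Prop) : Prop :=
  ∀ (i j : N) (w x y z : O),
    ¬ (pref i w x ∧ pref i x y ∧ pref i y z ∧
       Incomp (pref j) x z ∧ pref j z w ∧ Incomp (pref j) w y)

/-- Absence of both patterns. -/
def OutOfPattern (pref : N → O → O → Prop) : Prop :=
  OutOfMainPattern pref ∧ OutOfSecondaryPattern pref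

/-- The preferences can be layered: there is an ordered partition of the
outcomes (given by a layer-index function) such that higher layers are
unanimously weakly preferred, and within a layer no two players agree on
one pair while disagreeing on another pair. -/
def CanBeLayered (pref : N → O → O → Prop) : Prop :=
  ∃ ℓ : O → ℕ,
    (∀ x y, ℓ x < ℓ y → ∀ i, ¬ pref i y x) ∧
    (∀ (i j : N) (w x y z : O), ℓ w = ℓ x → ℓ x = ℓ y → ℓ y = ℓ z →
      ¬ (pref i x y ∧ pref j x y ∧ pref i w z ∧ pref j z w))

end GameTree
end SeqGame

open SeqGame GameTree in
/-- On a one-player game whose root gives access to every outcome of a preference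
cycle `x 0 ≺ x 1 ≺ ⋯ ≺ x (k-1) ≺ x 0`, the SI-dynamics does not terminate. -/
theorem stmt_1 {O : Type} (k : ℕ) (hk : 2 ≤ k) (x : ℕ → O) (pref : O → O → Prop)
    (hcyc : ∀ n, n < k → pref (x n) (x ((n + 1) % k))) :
    ∃ f : ℕ → Profile, ∀ n,
      XDyn {Upd.SI}
        (GameTree.node () ((List.range k).map fun n => GameTree.leaf (x n)))
        (fun _ : Unit => pref) (f n) (f (n + 1)) := by
  set T : GameTree Unit O :=
    GameTree.node () ((List.range k).map fun n => GameTree.leaf (x n)) with hT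
  have hget : ∀ m, m < k →
      ((List.range k).map fun n => GameTree.leaf (x n) : List (GameTree Unit O))[m]?
        = some (GameTree.leaf (x m)) := by
    intro m hm
    rw [List.getElem?_map, List.getElem?_range hm]; rfl
  have hsub : ∀ p i c, T.subtree p = some (GameTree.node i c) →
      p = [] ∧ c = (List.range k).map fun n => GameTree.leaf (x n) := by
    intro p i c h
    match p with
    | [] => simp [subtree, hT] at h; exact ⟨rfl, h.symm⟩
    | j :: q =>
      rw [hT] at h
      simp only [subtree] at h
      rcases h' : ((List.range k).map fun n => GameTree.leaf (x n) :
          List (GameTree Unit O))[j]? with _ | t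
      · rw [h'] at h; simp at h
      · rw [h'] at h
        have hj : j < k := by
          have := List.getElem?_eq_some_iff.mp h'
          simpa using this.1
        rw [hget j hj] at h'
        cases h'
        match q with
        | [] => simp [subtree] at h
        | _ :: _ => simp [subtree] at h
  have hout : ∀ s : Profile, s [] < k → T.outcome s = some (x (s [])) := by
    intro s hs
    rw [hT, outcome.eq_def]
    split
    · next ht => exact absurd ht (by simp)
    · next ht =>
      cases ht
      split
      · next t ht2 => rw [hget _ hs] at ht2; cases ht2; rw [outcome.eq_def]
      · next ht2 => rw [hget _ hs] at ht2; cases ht2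
  refine ⟨fun n _ => n % k, fun n => ?_⟩
  have hk0 : 0 < k := by omega
  have hmod : (n + 1) % k = (n % k + 1) % k := by
    conv_lhs => rw [Nat.add_mod, Nat.mod_eq_of_lt (show 1 < k by omega)]
  have hne : (n % k : ℕ) ≠ (n + 1) % k := by
    intro h
    rw [hmod] at h
    have hm : n % k < k := Nat.mod_lt _ (by omega)
    rcases Nat.lt_or_ge (n % k + 1) k with h1 | h1
    · rw [Nat.mod_eq_of_lt h1] at h; omega
    · have : n % k + 1 = k := by omega
      rw [this, Nat.mod_self] at h; omega
  refine ⟨?_, ?_, ⟨[], ⟨(), _, rfl⟩, hne⟩, ?_⟩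
  · intro p i c h
    obtain ⟨hp, hc⟩ := hsub p i c h
    subst hc
    simpa using Nat.mod_lt _ hk0
  · intro p i c h
    obtain ⟨hp, hc⟩ := hsub p i c h
    subst hc
    simpa using Nat.mod_lt _ hk0
  · intro u hu
    simp only [Set.mem_singleton_iff] at hu
    subst hu
    intro p i c h _
    obtain ⟨hp, hc⟩ := hsub p i c h
    subst hp; subst hc
    refine ⟨x (n % k), x ((n + 1) % k), ?_, ?_, ?_⟩
    · exact hout _ (Nat.mod_lt _ hk0)
    · exact hout _ (Nat.mod_lt _ hk0)
    · have := hcyc (n % k) (Nat.mod_lt _ hk0)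
      rw [hmod]
      simpa using this
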